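/- arXiv:1709.06062 — 2 statements merged into one kernel-verified Lean document; each statement's English description precedes it below -/
import Mathlib

section
/- Uniqueness propagation forces definability: suppose Q is a class forcing notion definable in a model N of ZFC with a definable forcing relation, and X is a class such that in every forcing extension of N by Q, X is the unique class satisfying a fixed first-order property ψ (with parameters from N). If some condition q forces that a definable class (defined by a formula χ) satisfies ψ, then for every instance x, x ∈ X holds iff some r ≤ q forces χ(x̌); hence X is definable in N. -/
open FirstOrder Language

/-- The language of set theory: one binary relation symbol `∈`. -/
inductive SetLangRel : ℕ → Type
  | mem : SetLangRel 2

def setLang : FirstOrder.Language := ⟨fun _ => Empty, SetLangRel⟩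

def memStructure {M : Type*} (E : M → M → Prop) : setLang.Structure M :=
  ⟨fun f _ => Empty.elim f, fun r x => match r with | .mem => E (x 0) (x 1)⟩

/-- Equality with a fixed element is definable with parameters from `univ`. -/
lemma definable_eq_const {L : FirstOrder.Language} {M : Type*} [L.Structure M] {n : ℕ}
    (i : Fin n) (a : M) :
    (Set.univ : Set M).Definable L {f : Fin n → M | f i = a} := by
  refine ⟨Term.equal (Term.var i) (Constants.term (L.con ⟨a, Set.mem_univ a⟩)), ?_⟩
  ext f
  simp [Term.equal, Formula.Realize, funMap_eq_coe_constants, coe_con]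

theorem uniqueness_propagation_forces_definability
    {M : Type*} (E : M → M → Prop)
    -- the class forcing notion `Q`, definable in `N` with definable order
    (Q : Set M) (leQ : M → M → Prop)
    (hQdef : letI := memStructure E;
      (Set.univ : Set M).Definable setLang {f : Fin 1 → M | f 0 ∈ Q})
    (hleQdef : letI := memStructure E;
      (Set.univ : Set M).Definable setLang {f : Fin 2 → M | leQ (f 0) (f 1)})
    -- the forcing relation `Frc r x`, i.e. `r ⊩ χ(x̌)`, definable in `N`
    (Frc : M → M → Prop)
    (hFrcdef : letI := memStructure E;
      (Set.univ : Set M).Definable setLang {f : Fin 2 → M | Frc (f 0) (f 1)})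
    (hFrcdown : ∀ r s x, r ∈ Q → s ∈ Q → leQ s r → Frc r x → Frc s x)
    -- the generic extensions: generic filters and the class defined by χ
    {Ext : Type*} (gen : Ext → Set M) (interp : Ext → Set M)
    (hgensub : ∀ e, gen e ⊆ Q)
    (hgendir : ∀ e, ∀ p ∈ gen e, ∀ p' ∈ gen e, ∃ s ∈ gen e, leQ s p ∧ leQ s p')
    (hgenup : ∀ e, ∀ p ∈ gen e, ∀ p' ∈ Q, leQ p p' → p' ∈ gen e)
    (hdense : ∀ r ∈ Q, ∃ e, r ∈ gen e)
    -- truth lemma for the formula χ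
    (htruth : ∀ e x, x ∈ interp e ↔ ∃ r ∈ gen e, Frc r x)
    -- the condition `q` forces that χ defines a class satisfying ψ; since `X`
    -- is the unique solution of ψ in every extension, in every extension
    -- containing `q` the class defined by χ is exactly `X`
    (X : Set M) (q : M) (hq : q ∈ Q)
    (huniq : ∀ e, q ∈ gen e → interp e = X) :
    (∀ x, x ∈ X ↔ ∃ r ∈ Q, leQ r q ∧ Frc r x) ∧
    (letI := memStructure E;
      (Set.univ : Set M).Definable setLang {f : Fin 1 → M | f 0 ∈ X}) := by
  letI := memStructure E
  have main : ∀ x, x ∈ X ↔ ∃ r ∈ Q, leQ r q ∧ Frc r x := by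
    intro x
    constructor
    · intro hx
      obtain ⟨e, he⟩ := hdense q hq
      have hx' : x ∈ interp e := by rw [huniq e he]; exact hx
      obtain ⟨r, hrg, hrF⟩ := (htruth e x).mp hx'
      obtain ⟨s, hsg, hsr, hsq⟩ := hgendir e r hrg q he
      exact ⟨s, hgensub e hsg, hsq,
        hFrcdown r s x (hgensub e hrg) (hgensub e hsg) hsr hrF⟩
    · rintro ⟨r, hrQ, hrq, hrF⟩
      obtain ⟨e, he⟩ := hdense r hrQ
      have hqg : q ∈ gen e := hgenup e r he q hq hrq
      have : x ∈ interp e := (htruth e x).mpr ⟨r, he, hrF⟩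
      rwa [huniq e hqg] at this
  refine ⟨main, ?_⟩
  -- the 3-variable set: f 1 is the condition r, f 2 = q, f 0 is x
  have h1 : (Set.univ : Set M).Definable setLang {f : Fin 3 → M | f 1 ∈ Q} := by
    have := hQdef.preimage_comp (fun _ : Fin 1 => (1 : Fin 3))
    convert this using 1
    rfl
  have h2 : (Set.univ : Set M).Definable setLang {f : Fin 3 → M | leQ (f 1) (f 2)} := by
    have := hleQdef.preimage_comp (Fin.succ : Fin 2 → Fin 3)
    convert this using 1
    rfl
  have h3 : (Set.univ : Set M).Definable setLang {f : Fin 3 → M | Frc (f 1) (f 0)} := by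
    have := hFrcdef.preimage_comp (![1, 0] : Fin 2 → Fin 3)
    convert this using 1
    rfl
  have h4 : (Set.univ : Set M).Definable setLang {f : Fin 3 → M | f 2 = q} :=
    definable_eq_const 2 q
  have hT : (Set.univ : Set M).Definable setLang
      ({f : Fin 3 → M | f 1 ∈ Q} ∩ {f | leQ (f 1) (f 2)} ∩ {f | Frc (f 1) (f 0)}
        ∩ {f | f 2 = q}) :=
    ((h1.inter h2).inter h3).inter h4
  have himg := hT.image_comp (fun _ : Fin 1 => (0 : Fin 3))
  convert himg using 1
  ext f
  simp only [Set.mem_setOf_eq, Set.mem_image, Set.mem_inter_iff]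
  rw [main (f 0)]
  constructor
  · rintro ⟨r, hrQ, hrq, hrF⟩
    refine ⟨![f 0, r, q], ⟨⟨⟨hrQ, hrq⟩, hrF⟩, rfl⟩, ?_⟩
    funext i
    have : i = 0 := Subsingleton.elim i 0
    subst this
    rfl
  · rintro ⟨g, ⟨⟨⟨hgQ, hgle⟩, hgF⟩, hg2⟩, rfl⟩
    exact ⟨g 1, hgQ, hg2 ▸ hgle, hgF⟩
end

section
/- An Easton-support product of small forcing is Ord-c.c. when Ord is Mahlo: assume ZFC plus 'Ord is Mahlo' (every definable closed unbounded class of ordinals contains a regular cardinal, schematically). Let P = ∏_α Q_α be an Easton-support product of a definable sequence of posets with each Q_α of size less than the next coding point. Then every definable antichain of P is a set (P has the Ord-chain condition). The proof is the class analogue of the Δ-system argument showing the Easton product below a Mahlo cardinal κ is κ-c.c. -/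
/- STATEMENT 19: An Easton-support product of small forcing is Ord-c.c. when
Ord is Mahlo.

"Ord is Mahlo" is rendered as: every club class of ordinals contains a regular
cardinal (the class form of the definable scheme).  `P = ∏_α Q α` is the
Easton-support product of a sequence of posets (with top element `1 = ⊤`),
where each `Q α` has size less than the corresponding coding point `δ α`:
conditions have set-sized support which is bounded below every regular
cardinal.  Conclusion: every antichain (in the forcing sense: a pairwise
incompatible class of conditions) is a set, i.e. has small cardinality —
`P` has the Ord-chain condition.  The proof is the class analogue of the
Δ-system argument below a Mahlo cardinal. -/

/-- "Ord is Mahlo": every club class of ordinals contains a regular cardinal. -/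
def OrdIsMahlo : Prop :=
  ∀ C : Set Ordinal.{0},
    (∀ o : Ordinal, ∃ c ∈ C, o < c) →                                  -- unbounded
    (∀ o : Ordinal, Order.IsSuccLimit o → (∀ b < o, ∃ c ∈ C, b < c ∧ c < o) → o ∈ C) → -- closed
    ∃ κ ∈ C, ∃ c : Cardinal.{0}, c.IsRegular ∧ c.ord = κ

variable (Q : Ordinal.{0} → Type) [∀ α, Preorder (Q α)] [∀ α, OrderTop (Q α)]

/-- A condition of the Easton-support product `∏_α Q α`: a function with
set-sized support, whose support is moreover bounded below every regular
cardinal. -/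
structure EastonProdCond : Type 1 where
  comp : ∀ α : Ordinal.{0}, Q α
  bounded : ∃ β : Ordinal, ∀ α, β ≤ α → comp α = ⊤
  easton : ∀ κ : Cardinal.{0}, κ.IsRegular →
    Cardinal.mk {α : Ordinal // α < κ.ord ∧ comp α ≠ ⊤} < Cardinal.lift.{1} κ

instance : Preorder (EastonProdCond Q) where
  le p q := ∀ α, p.comp α ≤ q.comp α
  le_refl p α := le_refl _
  le_trans p q r h₁ h₂ α := le_trans (h₁ α) (h₂ α)

section Aux

/-- Closure points of an ordinal function form an unbounded class. -/
lemma closurePoints_unbounded (g : Ordinal.{0} → Ordinal.{0}) (o : Ordinal.{0}) :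
    ∃ cc : Ordinal.{0}, (∀ γ < cc, g γ < cc) ∧ o < cc := by
  let a : ℕ → Ordinal.{0} := fun n =>
    Nat.rec (o + 1) (fun _ x => (⨆ γ : Set.Iio (x + 1), g γ.1) + x + 1) n
  have haS : ∀ n, a (n + 1) = (⨆ γ : Set.Iio (a n + 1), g γ.1) + a n + 1 := fun n => rfl
  have hmono : ∀ n, a n < a (n + 1) := by
    intro n
    rw [haS]
    calc a n ≤ (⨆ γ : Set.Iio (a n + 1), g γ.1) + a n := le_add_self
    _ < (⨆ γ : Set.Iio (a n + 1), g γ.1) + a n + 1 := by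
        rw [Ordinal.add_one_eq_succ]; exact Order.lt_succ _
  refine ⟨⨆ n, a n, ?_, ?_⟩
  · intro γ hγ
    rw [Ordinal.lt_iSup_iff] at hγ
    obtain ⟨n, hn⟩ := hγ
    have h1 : g γ ≤ ⨆ γ' : Set.Iio (a n + 1), g γ'.1 :=
      Ordinal.le_iSup (fun γ' : Set.Iio (a n + 1) => g γ'.1)
        ⟨γ, lt_trans hn (by rw [Ordinal.add_one_eq_succ]; exact Order.lt_succ _)⟩
    have h2 : (⨆ γ' : Set.Iio (a n + 1), g γ'.1) < a (n + 1) := by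
      rw [haS]
      calc (⨆ γ' : Set.Iio (a n + 1), g γ'.1)
          ≤ (⨆ γ' : Set.Iio (a n + 1), g γ'.1) + a n := le_self_add
        _ < _ := by rw [Ordinal.add_one_eq_succ]; exact Order.lt_succ _
    exact lt_of_le_of_lt h1 (lt_of_lt_of_le h2 (Ordinal.le_iSup a (n + 1)))
  · have : o < a 0 := by
      show o < o + 1
      rw [Ordinal.add_one_eq_succ]; exact Order.lt_succ _
    exact lt_of_lt_of_le this (Ordinal.le_iSup a 0)

end Aux

/-- If Ord is Mahlo, then the Easton-support product of a sequence of posets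
`Q α`, each of size less than the coding point `δ α`, has the Ord-chain
condition: every (forcing) antichain is a set, i.e. has small cardinality. -/
theorem easton_product_ord_cc (hM : OrdIsMahlo)
    (δ : Ordinal.{0} → Cardinal.{0}) (hreg : ∀ α, (δ α).IsRegular)
    (hmono : StrictMono δ)
    (hsize : ∀ α, Cardinal.lift.{1} (Cardinal.mk (Q α)) < Cardinal.lift.{1} (δ α)) :
    ∀ A : Set (EastonProdCond Q),
      (∀ p ∈ A, ∀ q ∈ A, p ≠ q → ¬ ∃ r : EastonProdCond Q, r ≤ p ∧ r ≤ q) →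
      Small.{0} A := by
  intro A hA
  by_contra hsmall
  -- Step 1: embed the ordinals into A
  have h2 : Cardinal.univ.{0,1} ≤ Cardinal.lift.{1} (Cardinal.mk A) :=
    le_of_not_gt (fun h => hsmall (Cardinal.small_iff_lift_mk_lt_univ.mpr h))
  rw [Cardinal.lift_id, Cardinal.univ_id] at h2
  obtain ⟨e⟩ : Nonempty (Ordinal.{0} ↪ A) := (Cardinal.le_def _ _).mp h2
  set p : Ordinal.{0} → EastonProdCond Q := fun ξ => ((e ξ : A) : EastonProdCond Q) with hp
  -- the coding predicate: at a regular point κ, the condition `p κ` has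
  -- support ∩ κ ⊆ γ and restriction to γ equal to r
  let X : (γ : Ordinal.{0}) → ((a : Set.Iio γ) → Q a) → Ordinal.{0} → Prop :=
    fun γ r κ =>
      (∃ c : Cardinal.{0}, c.IsRegular ∧ c.ord = κ) ∧
      (∀ α, γ ≤ α → α < κ → (p κ).comp α = ⊤) ∧
      (∀ α (h : α < γ), (p κ).comp α = r ⟨α, h⟩)
  -- Step 2: some code has an unbounded fiber
  have key : ∃ (γ : Ordinal.{0}) (r : (a : Set.Iio γ) → Q a),
      ∀ o, ∃ κ, o < κ ∧ X γ r κ := by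
    by_contra hk
    have hk' : ∀ (γ : Ordinal.{0}) (r : (a : Set.Iio γ) → Q a),
        ∃ o, ∀ κ, o < κ → ¬ X γ r κ := by
      intro γ r
      by_contra h2'
      apply hk
      refine ⟨γ, r, fun o => ?_⟩
      by_contra h3
      exact h2' ⟨o, fun κ hlt hX => h3 ⟨κ, hlt, hX⟩⟩
    -- the bound function and its closure points
    let g : Ordinal.{0} → Ordinal.{0} :=
      fun γ => ⨆ r : (a : Set.Iio γ) → Q a, (hk' γ r).choose
    let C : Set Ordinal.{0} := {o | ∀ γ < o, g γ < o}
    have hunb : ∀ o : Ordinal, ∃ c ∈ C, o < c := by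
      intro o
      obtain ⟨cc, h1, h2⟩ := closurePoints_unbounded g o
      exact ⟨cc, h1, h2⟩
    have hcl : ∀ o : Ordinal, Order.IsSuccLimit o → (∀ b < o, ∃ c ∈ C, b < c ∧ c < o) → o ∈ C := by
      intro o _ h γ hγ
      obtain ⟨c, hc, hγc, hco⟩ := h γ hγ
      exact lt_trans (hc γ hγc) hco
    obtain ⟨κ, hκC, c, hcreg, hcord⟩ := hM C hunb hcl
    subst hcord
    -- the support of `p c.ord` below `c.ord` is bounded by some γκ < c.ord
    let ι := {α : Ordinal // α < c.ord ∧ (p c.ord).comp α ≠ ⊤}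
    have hsmι : Small.{0} ι :=
      small_of_injective (f := fun a : ι => (⟨a.1, a.2.1⟩ : Set.Iio c.ord))
        (fun x y h => Subtype.ext (Subtype.mk_eq_mk.mp h))
    let f' : Shrink.{0} ι → Ordinal.{0} := fun i => ((equivShrink ι).symm i).1 + 1
    let γκ : Ordinal.{0} := ⨆ i, f' i
    have hbnd : ∀ a : ι, a.1 + 1 ≤ γκ := by
      intro a
      have : f' (equivShrink ι a) = a.1 + 1 := by simp [f']
      rw [← this]
      exact Ordinal.le_iSup f' _
    have hγκ : γκ < c.ord := by
      apply Cardinal.iSup_lt_ord_of_isRegular hcreg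
      · have h1 : Cardinal.lift.{1} (Cardinal.mk (Shrink.{0} ι)) = Cardinal.mk ι :=
          Cardinal.lift_mk_shrink''.{1,0} ι
        have h2 := (p c.ord).easton c hcreg
        rw [← h1] at h2
        exact Cardinal.lift_lt.mp h2
      · intro i
        rw [show f' i = ((equivShrink ι).symm i).1 + 1 from rfl, Ordinal.add_one_eq_succ]
        exact (Cardinal.isSuccLimit_ord hcreg.aleph0_le).succ_lt ((equivShrink ι).symm i).2.1
    -- `c.ord` satisfies the code (γκ, restriction)
    let r₀ : (a : Set.Iio γκ) → Q a := fun a => (p c.ord).comp a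
    have hX : X γκ r₀ c.ord := by
      refine ⟨⟨c, hcreg, rfl⟩, ?_, fun α h => rfl⟩
      intro α hγα hακ
      by_contra hne
      have := hbnd ⟨α, hακ, hne⟩
      have h1 : α < γκ := lt_of_lt_of_le (by rw [Ordinal.add_one_eq_succ]; exact Order.lt_succ _) this
      exact absurd (lt_of_lt_of_le h1 hγα) (lt_irrefl α)
    -- contradiction with closure
    have hle : c.ord ≤ (hk' γκ r₀).choose :=
      le_of_not_gt (fun hlt => (hk' γκ r₀).choose_spec c.ord hlt hX)
    have hle2 : (hk' γκ r₀).choose ≤ g γκ :=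
      Ordinal.le_iSup (fun r : (a : Set.Iio γκ) → Q a => (hk' γκ r).choose) r₀
    exact absurd (lt_of_le_of_lt (le_trans hle hle2) (hκC γκ hγκ)) (lt_irrefl _)
  -- Step 3: from an unbounded fiber, extract two compatible conditions
  obtain ⟨γ, r, hU⟩ := key
  obtain ⟨κ₁, -, h₁good⟩ := hU 0
  obtain ⟨b₁, hb₁spec⟩ := (p κ₁).bounded
  obtain ⟨κ₂, hκ₂gt, h₂good⟩ := hU (max κ₁ b₁)
  have hκ₁lt : κ₁ < κ₂ := lt_of_le_of_lt (le_max_left _ _) hκ₂gt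
  have hb₁lt : b₁ < κ₂ := lt_of_le_of_lt (le_max_right _ _) hκ₂gt
  obtain ⟨b₂, hb₂spec⟩ := (p κ₂).bounded
  have hne : p κ₁ ≠ p κ₂ := by
    intro h
    exact absurd (e.injective (Subtype.ext h)) (ne_of_lt hκ₁lt)
  -- the amalgamated condition
  refine hA (p κ₁) (e κ₁).2 (p κ₂) (e κ₂).2 hne ⟨⟨fun α =>
      if α < κ₂ then (p κ₁).comp α else (p κ₂).comp α, ⟨max b₁ b₂, ?_⟩, ?_⟩, ?_, ?_⟩
  · -- bounded
    intro α hα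
    split_ifs with h
    · exact hb₁spec α (le_trans (le_max_left _ _) hα)
    · exact hb₂spec α (le_trans (le_max_right _ _) hα)
  · -- easton
    intro μ hμ
    have h1 := (p κ₁).easton μ hμ
    have h2 := (p κ₂).easton μ hμ
    have hsub : {α : Ordinal |
          α < μ.ord ∧ (if α < κ₂ then (p κ₁).comp α else (p κ₂).comp α) ≠ ⊤} ⊆
        {α : Ordinal | α < μ.ord ∧ (p κ₁).comp α ≠ ⊤} ∪
        {α : Ordinal | α < μ.ord ∧ (p κ₂).comp α ≠ ⊤} := by
      intro α hα
      by_cases h : α < κ₂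
      · left
        refine ⟨hα.1, ?_⟩
        have := hα.2
        rwa [if_pos h] at this
      · right
        refine ⟨hα.1, ?_⟩
        have := hα.2
        rwa [if_neg h] at this
    calc Cardinal.mk {α : Ordinal //
          α < μ.ord ∧ (if α < κ₂ then (p κ₁).comp α else (p κ₂).comp α) ≠ ⊤}
        ≤ Cardinal.mk ({α : Ordinal | α < μ.ord ∧ (p κ₁).comp α ≠ ⊤} ∪
            {α : Ordinal | α < μ.ord ∧ (p κ₂).comp α ≠ ⊤} : Set Ordinal) :=
          Cardinal.mk_le_mk_of_subset hsub
      _ ≤ Cardinal.mk {α : Ordinal | α < μ.ord ∧ (p κ₁).comp α ≠ ⊤} +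
            Cardinal.mk {α : Ordinal | α < μ.ord ∧ (p κ₂).comp α ≠ ⊤} :=
          Cardinal.mk_union_le _ _
      _ < Cardinal.lift.{1} μ :=
          Cardinal.add_lt_of_lt (Cardinal.aleph0_le_lift.mpr hμ.aleph0_le) h1 h2
  · -- ≤ p κ₁
    intro α
    dsimp only
    split_ifs with h
    · exact le_refl _
    · rw [hb₁spec α (le_trans (le_of_lt hb₁lt) (not_lt.mp h))]
      exact le_top
  · -- ≤ p κ₂
    intro α
    dsimp only
    split_ifs with h
    · by_cases hγ : α < γ
      · rw [h₁good.2.2 α hγ, ← h₂good.2.2 α hγ]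
      · rw [h₂good.2.1 α (not_lt.mp hγ) h]
        exact le_top
    · exact le_refl _
end
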